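/- The expected value of $\log\|O - O'\|_F^{-1}$, where $O, O'$ are chosen independently and uniformly with respect to the Haar measure on $\mathrm{SO}(3)$, equals $-(1+\log 2)/2$. Equivalently, $\frac{2}{\pi}\int_0^\pi \log(\sqrt{8}\sin(\theta/2))\sin^2(\theta/2)\,d\theta = \frac{1+\log 2}{2}$. -/

import Mathlib

open Real MeasureTheory intervalIntegral

open Set

/-- `log` is interval integrable on `[0,1]` (improper at `0`). -/
lemma intInt_log01 : IntervalIntegrable Real.log volume 0 1 := by
  rw [intervalIntegrable_iff_integrableOn_Ioc_of_le zero_le_one]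
  have h : IntegrableOn (fun x : ℝ => -Real.log x) (Ioc 0 1) volume := by
    apply intervalIntegral.integrableOn_deriv_of_nonneg
      (g := fun x : ℝ => x - x * Real.log x)
    · exact (continuous_id.sub Real.continuous_mul_log).continuousOn
    · intro x hx
      have := ((hasDerivAt_id x).sub (Real.hasDerivAt_mul_log hx.1.ne'))
      exact this.congr_deriv (by ring)
    · intro x hx
      have : Real.log x ≤ 0 := Real.log_nonpos hx.1.le hx.2.le
      linarith
  exact integrable_neg_iff.mp h

lemma intInt_log0b {b : ℝ} (hb : 1 ≤ b) : IntervalIntegrable Real.log volume 0 b := by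
  refine intInt_log01.trans (intervalIntegrable_log ?_)
  rw [uIcc_of_le hb]
  rintro ⟨h0, -⟩
  linarith

/-- `log ∘ sin` is interval integrable on `[0, π/2]`. -/
lemma intInt_logsin : IntervalIntegrable (fun x => Real.log (Real.sin x)) volume 0 (π/2) := by
  have hpi2 : (1:ℝ) ≤ π / 2 := by
    have := Real.pi_gt_three; linarith
  rw [intervalIntegrable_iff_integrableOn_Ioc_of_le (by linarith)]
  have hmeas : AEStronglyMeasurable (fun x => Real.log (Real.sin x))
      (volume.restrict (Ioc 0 (π/2))) := by
    refine (ContinuousOn.aestronglyMeasurable ?_ measurableSet_Ioc)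
    refine ContinuousOn.log Real.continuous_sin.continuousOn ?_
    intro x hx
    exact (Real.sin_pos_of_pos_of_lt_pi hx.1 (by linarith [hx.2, Real.pi_pos])).ne'
  have hgint : IntegrableOn (fun x : ℝ => Real.log (π/2) - Real.log x) (Ioc 0 (π/2)) volume := by
    have := (intervalIntegrable_const (c := Real.log (π/2)) (μ := volume)
      (a := (0:ℝ)) (b := π/2)).sub (intInt_log0b hpi2)
    rwa [intervalIntegrable_iff_integrableOn_Ioc_of_le (by linarith)] at this
  refine MeasureTheory.Integrable.mono hgint hmeas ?_
  rw [ae_restrict_iff' measurableSet_Ioc]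
  filter_upwards with x hx
  have hx0 : 0 < x := hx.1
  have hx2 : x ≤ π / 2 := hx.2
  have hs_pos : 0 < Real.sin x := Real.sin_pos_of_pos_of_lt_pi hx0 (by linarith [Real.pi_pos])
  have hs_le : Real.sin x ≤ 1 := Real.sin_le_one x
  have hlow : 2 / π * x ≤ Real.sin x := Real.mul_le_sin hx0.le hx2
  have hlog_le : Real.log (Real.sin x) ≤ 0 := Real.log_nonpos hs_pos.le hs_le
  have hpos : (0:ℝ) < 2 / π * x := by
    have := Real.pi_pos; positivity
  have hlog_ge : Real.log (2 / π * x) ≤ Real.log (Real.sin x) :=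
    Real.log_le_log hpos hlow
  have hsplit : Real.log (2 / π * x) = Real.log x - Real.log (π/2) := by
    have hpi : (π:ℝ) ≠ 0 := Real.pi_ne_zero
    have h2 : (2:ℝ)/π = (π/2)⁻¹ := by field_simp
    rw [h2, Real.log_mul (by positivity) hx0.ne', Real.log_inv]
    ring
  have hbound_nonneg : 0 ≤ Real.log (π/2) - Real.log x := by
    have := Real.log_le_log hx0 hx2
    linarith
  rw [Real.norm_eq_abs, Real.norm_eq_abs, abs_of_nonpos hlog_le, abs_of_nonneg hbound_nonneg]
  rw [hsplit] at hlog_ge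
  linarith

lemma intInt_logcos : IntervalIntegrable (fun x => Real.log (Real.cos x)) volume 0 (π/2) := by
  have h := (intInt_logsin.comp_sub_left (π/2)).symm
  simp only [sub_zero, sub_self] at h
  have : (fun x => Real.log (Real.sin (π/2 - x))) = fun x => Real.log (Real.cos x) := by
    funext x; rw [Real.sin_pi_div_two_sub]
  rwa [this] at h

lemma intInt_logsin_pi : IntervalIntegrable (fun x => Real.log (Real.sin x)) volume 0 π := by
  refine intInt_logsin.trans ?_
  have h := (intInt_logsin.comp_sub_left π).symm
  simp only [sub_zero, sub_self] at h
  have heq : (fun x => Real.log (Real.sin (π - x))) = fun x => Real.log (Real.sin x) := by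
    funext x; rw [Real.sin_pi_sub]
  rw [heq, show π - π/2 = π/2 by ring] at h
  exact h

lemma intInt_logsin_mul {g : ℝ → ℝ} (hg : Continuous g) :
    IntervalIntegrable (fun x => Real.log (Real.sin x) * g x) volume 0 (π/2) :=
  intInt_logsin.mul_continuousOn hg.continuousOn

/-- FTC step: `∫₀^{π/2} (cos²x + log(sin x)·cos 2x) = 0`. -/
lemma keyC : ∫ x in (0:ℝ)..(π/2),
    (Real.cos x ^ 2 + Real.log (Real.sin x) * Real.cos (2*x)) = 0 := by
  have hpi : (0:ℝ) < π := Real.pi_pos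
  set F : ℝ → ℝ := fun x => (Real.log (Real.sin x) * Real.sin x) * Real.cos x with hF
  have hcont : ContinuousOn F (Icc 0 (π/2)) := by
    intro x hx
    rcases eq_or_lt_of_le hx.1 with h0 | h0
    · -- x = 0 : continuity via the limit `y log y → 0`
      subst h0
      have h1 : Filter.Tendsto (fun y : ℝ => Real.log y * y)
          (nhdsWithin 0 (Set.Ioi 0)) (nhds 0) := by
        have := tendsto_log_mul_rpow_nhdsGT_zero (r := 1) one_pos
        refine this.congr' ?_
        filter_upwards [self_mem_nhdsWithin] with y hy
        rw [Real.rpow_one]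
      rw [show Icc (0:ℝ) (π/2) = insert 0 (Ioc 0 (π/2)) from
        (Set.Ioc_insert_left (by positivity)).symm, continuousWithinAt_insert_self]
      have hF0 : F 0 = 0 := by simp [hF]
      unfold ContinuousWithinAt
      rw [hF0]
      have hsin : Filter.Tendsto Real.sin (nhdsWithin 0 (Ioc 0 (π/2)))
          (nhdsWithin 0 (Set.Ioi 0)) := by
        apply tendsto_nhdsWithin_of_tendsto_nhds_of_eventually_within
        · simpa using (Real.continuous_sin.tendsto 0).mono_left nhdsWithin_le_nhds
        · filter_upwards [self_mem_nhdsWithin] with y hy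
          exact Real.sin_pos_of_pos_of_lt_pi hy.1 (by linarith [hy.2])
      have h2 : Filter.Tendsto (fun x => Real.log (Real.sin x) * Real.sin x)
          (nhdsWithin 0 (Ioc 0 (π/2))) (nhds 0) := h1.comp hsin
      have hcos : Filter.Tendsto Real.cos (nhdsWithin 0 (Ioc 0 (π/2))) (nhds 1) := by
        simpa using (Real.continuous_cos.tendsto 0).mono_left nhdsWithin_le_nhds
      simpa using h2.mul hcos
    · -- x > 0 : `sin x ≠ 0`, everything is continuous
      have hs : Real.sin x ≠ 0 :=
        (Real.sin_pos_of_pos_of_lt_pi h0 (by linarith [hx.2])).ne'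
      exact ((((Real.continuousAt_log hs).comp
        Real.continuous_sin.continuousAt).mul Real.continuous_sin.continuousAt).mul
        Real.continuous_cos.continuousAt).continuousWithinAt
  have hderiv : ∀ x ∈ Ioo (0:ℝ) (π/2), HasDerivAt F
      (Real.cos x ^ 2 + Real.log (Real.sin x) * Real.cos (2*x)) x := by
    intro x hx
    have hs : Real.sin x ≠ 0 :=
      (Real.sin_pos_of_pos_of_lt_pi hx.1 (by linarith [hx.2])).ne'
    have h1 : HasDerivAt (fun x => Real.log (Real.sin x)) (Real.cos x / Real.sin x) x :=
      (Real.hasDerivAt_sin x).log hs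
    have h4 := (h1.mul (Real.hasDerivAt_sin x)).mul (Real.hasDerivAt_cos x)
    refine h4.congr_deriv ?_
    have hc2 : Real.cos (2*x) = Real.cos x ^ 2 - Real.sin x ^ 2 := by
      rw [Real.cos_two_mul]
      nlinarith [Real.sin_sq_add_cos_sq x]
    rw [hc2]
    simp only [Pi.mul_apply]
    field_simp
    ring
  have hint : IntervalIntegrable
      (fun x => Real.cos x ^ 2 + Real.log (Real.sin x) * Real.cos (2*x)) volume 0 (π/2) :=
    ((Real.continuous_cos.pow 2).intervalIntegrable _ _).add
      (intInt_logsin_mul (Real.continuous_cos.comp (continuous_const.mul continuous_id)))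
  have hftc := intervalIntegral.integral_eq_sub_of_hasDeriv_right_of_le (by positivity) hcont
    (fun x hx => (hderiv x hx).hasDerivWithinAt) hint
  rw [hftc]
  simp [hF]

lemma intInt_logsin_half2 :
    IntervalIntegrable (fun x => Real.log (Real.sin x)) volume (π/2) π := by
  have h := (intInt_logsin.comp_sub_left π).symm
  simp only [sub_zero, sub_self] at h
  have heq : (fun x => Real.log (Real.sin (π - x))) = fun x => Real.log (Real.sin x) := by
    funext x; rw [Real.sin_pi_sub]
  rw [heq, show π - π/2 = π/2 by ring] at h
  exact h

lemma keyC' : ∫ x in (0:ℝ)..(π/2), Real.log (Real.sin x) * Real.cos (2*x) = -(π/4) := by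
  have hsplit := intervalIntegral.integral_add
    (f := fun x => Real.cos x ^ 2) (g := fun x => Real.log (Real.sin x) * Real.cos (2*x))
    ((Real.continuous_cos.pow 2).intervalIntegrable (μ := volume) 0 (π/2))
    (intInt_logsin_mul (g := fun x => Real.cos (2*x)) (by continuity))
  have hcos2 : ∫ x in (0:ℝ)..(π/2), Real.cos x ^ 2 = π/4 := by
    rw [integral_cos_sq]
    simp only [Real.sin_zero, Real.cos_zero, Real.sin_pi_div_two, Real.cos_pi_div_two]
    ring
  have hkc := keyC
  rw [hsplit, hcos2] at hkc
  linarith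

lemma keyK : ∫ x in (0:ℝ)..(π/2), Real.log (Real.sin x) = -(π/2) * Real.log 2 := by
  have hpi : (0:ℝ) < π := Real.pi_pos
  set K := ∫ x in (0:ℝ)..(π/2), Real.log (Real.sin x) with hK
  have hcosK : ∫ x in (0:ℝ)..(π/2), Real.log (Real.cos x) = K := by
    have h := intervalIntegral.integral_comp_sub_left (a := (0:ℝ)) (b := π/2)
      (fun x => Real.log (Real.sin x)) (π/2)
    simp only [sub_zero, sub_self] at h
    rw [hK, ← h]
    apply intervalIntegral.integral_congr
    intro x _
    dsimp only
    rw [Real.sin_pi_div_two_sub]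
  have hsum : ∫ x in (0:ℝ)..(π/2), (Real.log (Real.sin x) + Real.log (Real.cos x)) = K + K := by
    rw [intervalIntegral.integral_add intInt_logsin intInt_logcos, hcosK]
  have hstep1 : ∫ x in (0:ℝ)..(π/2), (Real.log (Real.sin x) + Real.log (Real.cos x))
      = ∫ x in (0:ℝ)..(π/2), Real.log (Real.sin (2*x) / 2) := by
    apply intervalIntegral.integral_congr
    intro x hx
    dsimp only
    rw [Set.uIcc_of_le (by positivity)] at hx
    rw [show Real.sin (2*x) / 2 = Real.sin x * Real.cos x by rw [Real.sin_two_mul]; ring]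
    rcases eq_or_lt_of_le hx.1 with h0 | h0
    · rw [← h0]; simp
    · rcases eq_or_lt_of_le hx.2 with h1 | h1
      · rw [h1]; simp
      · have hs : Real.sin x ≠ 0 :=
          (Real.sin_pos_of_pos_of_lt_pi h0 (by linarith)).ne'
        have hc : Real.cos x ≠ 0 := (Real.cos_pos_of_mem_Ioo ⟨by linarith, h1⟩).ne'
        rw [Real.log_mul hs hc]
  have hstep2 : ∫ x in (0:ℝ)..(π/2), Real.log (Real.sin (2*x) / 2)
      = 2⁻¹ * ∫ y in (0:ℝ)..π, Real.log (Real.sin y / 2) := by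
    have h := intervalIntegral.integral_comp_mul_left (a := (0:ℝ)) (b := π/2)
      (fun y => Real.log (Real.sin y / 2)) (c := (2:ℝ)) two_ne_zero
    simpa [show (2:ℝ)*(π/2) = π by ring] using h
  have hstep3 : ∫ y in (0:ℝ)..π, Real.log (Real.sin y / 2)
      = ∫ y in (0:ℝ)..π, (Real.log (Real.sin y) - Real.log 2) := by
    apply intervalIntegral.integral_congr_ae
    have hπ : ∀ᵐ (y:ℝ) ∂volume, y ≠ π := by
      refine MeasureTheory.ae_iff.mpr ?_
      simp only [not_not, Set.setOf_eq_eq_singleton]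
      exact Real.volume_singleton
    filter_upwards [hπ] with y hy hyI
    rw [Set.uIoc_of_le hpi.le] at hyI
    have hs : Real.sin y ≠ 0 :=
      (Real.sin_pos_of_pos_of_lt_pi hyI.1 (lt_of_le_of_ne hyI.2 hy)).ne'
    rw [Real.log_div hs two_ne_zero]
  have hstep4 : ∫ y in (0:ℝ)..π, (Real.log (Real.sin y) - Real.log 2)
      = (∫ y in (0:ℝ)..π, Real.log (Real.sin y)) - π * Real.log 2 := by
    rw [intervalIntegral.integral_sub intInt_logsin_pi
      (_root_.intervalIntegrable_const)]
    simp [smul_eq_mul]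
  have hstep5 : ∫ y in (0:ℝ)..π, Real.log (Real.sin y) = K + K := by
    rw [← intervalIntegral.integral_add_adjacent_intervals intInt_logsin intInt_logsin_half2]
    congr 1
    have h := intervalIntegral.integral_comp_sub_left (a := (0:ℝ)) (b := π/2)
      (fun x => Real.log (Real.sin x)) π
    simp only [sub_zero] at h
    rw [show π - π/2 = π/2 by ring] at h
    rw [← h]
    apply intervalIntegral.integral_congr
    intro x _
    dsimp only
    rw [Real.sin_pi_sub]
  have := hsum
  rw [hstep1, hstep2, hstep3, hstep4, hstep5] at this
  linarith

lemma keyA : ∫ x in (0:ℝ)..(π/2), Real.log (Real.sin x) * Real.sin x ^ 2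
    = π/8 - (π/4) * Real.log 2 := by
  have h1 : (∫ x in (0:ℝ)..(π/2), Real.log (Real.sin x) * Real.sin x ^ 2)
      + ∫ x in (0:ℝ)..(π/2), Real.log (Real.sin x) * Real.cos x ^ 2
      = -(π/2) * Real.log 2 := by
    rw [← intervalIntegral.integral_add (intInt_logsin_mul (g := fun x => Real.sin x ^ 2) (Real.continuous_sin.pow 2))
      (intInt_logsin_mul (g := fun x => Real.cos x ^ 2) (Real.continuous_cos.pow 2)), ← keyK]
    apply intervalIntegral.integral_congr
    intro x _
    dsimp only
    rw [← mul_add, Real.sin_sq_add_cos_sq, mul_one]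
  have h2 : (∫ x in (0:ℝ)..(π/2), Real.log (Real.sin x) * Real.sin x ^ 2)
      - ∫ x in (0:ℝ)..(π/2), Real.log (Real.sin x) * Real.cos x ^ 2
      = π/4 := by
    rw [← intervalIntegral.integral_sub (intInt_logsin_mul (g := fun x => Real.sin x ^ 2) (Real.continuous_sin.pow 2))
      (intInt_logsin_mul (g := fun x => Real.cos x ^ 2) (Real.continuous_cos.pow 2))]
    have heq : ∀ x : ℝ, Real.log (Real.sin x) * Real.sin x ^ 2
        - Real.log (Real.sin x) * Real.cos x ^ 2
        = -(Real.log (Real.sin x) * Real.cos (2*x)) := by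
      intro x
      rw [Real.cos_two_mul]
      linear_combination Real.log (Real.sin x) * Real.sin_sq_add_cos_sq x
    simp_rw [heq]
    rw [intervalIntegral.integral_neg, keyC']
    ring
  linarith

/-- The continuous logarithmic energy of `SO(3)`: the expected value of
`log ‖O - O'‖_F⁻¹` for Haar-random `O, O'` equals `-(1 + log 2)/2`; equivalently,
`(2/π) ∫₀^π log(√8 sin(θ/2)) sin²(θ/2) dθ = (1 + log 2)/2`. -/
theorem continuous_energy_SO3 :
    (2 / π) * ∫ θ in (0:ℝ)..π,
        Real.log (Real.sqrt 8 * Real.sin (θ / 2)) * Real.sin (θ / 2) ^ 2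
      = (1 + Real.log 2) / 2 := by
  have hpi : (0:ℝ) < π := Real.pi_pos
  have h0 : (∫ θ in (0:ℝ)..π,
      Real.log (Real.sqrt 8 * Real.sin (θ / 2)) * Real.sin (θ / 2) ^ 2)
      = 2 * ∫ x in (0:ℝ)..(π/2), Real.log (Real.sqrt 8 * Real.sin x) * Real.sin x ^ 2 := by
    have h := intervalIntegral.integral_comp_div (a := (0:ℝ)) (b := π)
      (f := fun x => Real.log (Real.sqrt 8 * Real.sin x) * Real.sin x ^ 2) (c := (2:ℝ))
      two_ne_zero
    simpa using h
  have hsq8 : Real.sqrt 8 ≠ 0 := by positivity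
  have h1 : (∫ x in (0:ℝ)..(π/2), Real.log (Real.sqrt 8 * Real.sin x) * Real.sin x ^ 2)
      = ∫ x in (0:ℝ)..(π/2),
        (Real.log (Real.sqrt 8) * Real.sin x ^ 2 + Real.log (Real.sin x) * Real.sin x ^ 2) := by
    apply intervalIntegral.integral_congr
    intro x hx
    dsimp only
    rw [Set.uIcc_of_le (by positivity)] at hx
    rcases eq_or_lt_of_le hx.1 with hx0 | hx0
    · rw [← hx0]; simp
    · have hs : Real.sin x ≠ 0 :=
        (Real.sin_pos_of_pos_of_lt_pi hx0 (by linarith [hx.2])).ne'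
      rw [Real.log_mul hsq8 hs]
      ring
  have h2 : (∫ x in (0:ℝ)..(π/2),
      (Real.log (Real.sqrt 8) * Real.sin x ^ 2 + Real.log (Real.sin x) * Real.sin x ^ 2))
      = Real.log (Real.sqrt 8) * (π/4) + (π/8 - (π/4) * Real.log 2) := by
    rw [intervalIntegral.integral_add (f := fun x => Real.log (Real.sqrt 8) * Real.sin x ^ 2)
      (g := fun x => Real.log (Real.sin x) * Real.sin x ^ 2)
      ((continuous_const.mul (Real.continuous_sin.pow 2)).intervalIntegrable _ _)
      (intInt_logsin_mul (Real.continuous_sin.pow 2)),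
      intervalIntegral.integral_const_mul, keyA, integral_sin_sq]
    simp only [Real.sin_zero, Real.cos_zero, Real.sin_pi_div_two, Real.cos_pi_div_two]
    ring
  have hsqrt : Real.log (Real.sqrt 8) = 3/2 * Real.log 2 := by
    rw [Real.log_sqrt (by norm_num : (8:ℝ) ≥ 0)]
    rw [show (8:ℝ) = 2 ^ (3:ℕ) by norm_num, Real.log_pow]
    push_cast; ring
  rw [h0, h1, h2, hsqrt]
  field_simp
  ring
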